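/- For every fixed k ∈ ℕ₀ there exist constants c, C > 0 such that for all n ∈ ℕ₀: a_n(s_k) = 0 whenever n−k is even, and c·(n+1)^{−3/4 − k/2} ≤ |a_n(s_k)| ≤ C·(n+1)^{−3/4 − k/2} whenever n−k is odd. -/

import Mathlib

open MeasureTheory ProbabilityTheory Filter Set

noncomputable section

/-- The standard Gaussian measure `N(0,1)` on `ℝ`. -/
def stdGaussian : Measure ℝ := gaussianReal 0 1

/-- The `n`-th normalized probabilists' Hermite polynomial as a function `ℝ → ℝ`. -/
def hermiteFun (n : ℕ) (x : ℝ) : ℝ :=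
  (Polynomial.aeval x (Polynomial.hermite n)) / Real.sqrt (n.factorial)

/-- The `n`-th Hermite coefficient `a_n(f) = ∫ f · h_n dγ`. -/
def hermiteCoeff (f : ℝ → ℝ) (n : ℕ) : ℝ :=
  ∫ x, f x * hermiteFun n x ∂stdGaussian

/-- The reference activation `s_k(x) = sgn(x) x^k / (2 k!)`. -/
def refAct (k : ℕ) (x : ℝ) : ℝ := Real.sign x * x ^ k / (2 * k.factorial)

open Topology
open scoped ENNReal NNReal

namespace RefActAux

open Polynomial Real

/-- Gaussian factor. -/
def G (x : ℝ) : ℝ := Real.exp (-(x ^ 2 / 2))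

lemma G_pos (x : ℝ) : 0 < G x := Real.exp_pos _

lemma G_neg (x : ℝ) : G (-x) = G x := by simp [G]

lemma continuous_G : Continuous G := by
  unfold G; fun_prop

lemma integrable_pow_mul_G (r : ℕ) : Integrable (fun x : ℝ => x ^ r * G x) := by
  have h := integrable_rpow_mul_exp_neg_mul_sq (b := 1/2) (by norm_num)
    (s := (r : ℝ)) (lt_of_lt_of_le neg_one_lt_zero (Nat.cast_nonneg r))
  have : (fun x : ℝ => x ^ (r:ℝ) * Real.exp (-(1/2) * x ^ 2)) = fun x : ℝ => x ^ r * G x := by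
    funext x
    rw [Real.rpow_natCast]
    congr 1
    unfold G
    ring_nf
  rwa [this] at h

lemma integrable_poly_mul_G (p : ℝ[X]) : Integrable (fun x => p.eval x * G x) := by
  induction p using Polynomial.induction_on' with
  | add p q hp hq => simpa [add_mul] using (hp.add hq : Integrable (fun x => eval x p * G x + eval x q * G x))
  | monomial r a =>
      have := (integrable_pow_mul_G r).const_mul a
      simpa [Polynomial.eval_monomial, mul_assoc] using this

lemma tendsto_pow_mul_G_atTop (r : ℕ) :
    Tendsto (fun x : ℝ => x ^ r * G x) atTop (𝓝 0) := by
  have h := rpow_mul_exp_neg_mul_sq_isLittleO_exp_neg (b := 1/2) (by norm_num) (r : ℝ)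
  have h2 : (fun x : ℝ => x ^ (r:ℝ) * Real.exp (-(1/2) * x ^ 2)) = fun x : ℝ => x ^ r * G x := by
    funext x
    rw [Real.rpow_natCast]
    congr 1
    unfold G
    ring_nf
  rw [h2] at h
  apply h.isBigO.trans_tendsto
  have : Tendsto (fun x : ℝ => -(1/2) * x) atTop atBot := by
    apply Tendsto.const_mul_atTop_of_neg (by norm_num) tendsto_id
  exact Real.tendsto_exp_atBot.comp this

lemma tendsto_poly_mul_G_atTop (p : ℝ[X]) :
    Tendsto (fun x => p.eval x * G x) atTop (𝓝 0) := by
  induction p using Polynomial.induction_on' with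
  | add p q hp hq =>
      have := hp.add hq
      simp only [add_zero] at this
      refine this.congr fun x => by simp [add_mul]
  | monomial r a =>
      have := (tendsto_pow_mul_G_atTop r).const_mul a
      simp only [mul_zero] at this
      refine this.congr fun x => by simp [Polynomial.eval_monomial]; ring

lemma tendsto_poly_mul_G_atBot (p : ℝ[X]) :
    Tendsto (fun x => p.eval x * G x) atBot (𝓝 0) := by
  have h := (tendsto_poly_mul_G_atTop (p.comp (-X))).comp tendsto_neg_atBot_atTop
  refine h.congr fun x => ?_
  simp [Function.comp, Polynomial.eval_comp, G_neg]


/-- Hermite polynomial times Gaussian. -/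
def Hf (n : ℕ) (x : ℝ) : ℝ := (aeval x (hermite n)) * G x

lemma pow_mul_Hf_eq_poly (r n : ℕ) :
    (fun x : ℝ => x ^ r * Hf n x)
      = fun x => (X ^ r * (hermite n).map (algebraMap ℤ ℝ)).eval x * G x := by
  funext x
  simp [Hf, Polynomial.eval_mul, Polynomial.eval_pow, aeval_def, Polynomial.eval_map, mul_assoc]

lemma integrable_pow_mul_Hf (r n : ℕ) : Integrable (fun x : ℝ => x ^ r * Hf n x) := by
  rw [pow_mul_Hf_eq_poly]; exact integrable_poly_mul_G _

lemma tendsto_pow_mul_Hf_atTop (r n : ℕ) :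
    Tendsto (fun x : ℝ => x ^ r * Hf n x) atTop (𝓝 0) := by
  rw [pow_mul_Hf_eq_poly]; exact tendsto_poly_mul_G_atTop _

lemma tendsto_pow_mul_Hf_atBot (r n : ℕ) :
    Tendsto (fun x : ℝ => x ^ r * Hf n x) atBot (𝓝 0) := by
  rw [pow_mul_Hf_eq_poly]; exact tendsto_poly_mul_G_atBot _

lemma hasDerivAt_G (x : ℝ) : HasDerivAt G (-x * G x) x := by
  have h : HasDerivAt (fun x : ℝ => -(x ^ 2 / 2)) (-x) x := by
    have := ((hasDerivAt_pow 2 x).div_const 2).neg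
    exact this.congr_deriv (by push_cast; ring)
  have h2 := h.exp
  have e : -x * G x = Real.exp (-(x ^ 2 / 2)) * (-x) := by simp [G]; ring
  rw [e]
  exact h2

lemma hasDerivAt_Hf (n : ℕ) (x : ℝ) : HasDerivAt (Hf n) (-(Hf (n + 1) x)) x := by
  have h : HasDerivAt (fun y => aeval y (hermite n) * G y)
      (aeval x (derivative (hermite n)) * G x + aeval x (hermite n) * (-x * G x)) x :=
    ((hermite n).hasDerivAt_aeval (𝕜 := ℝ) x).mul (hasDerivAt_G x)
  have : Hf n = fun y => aeval y (hermite n) * G y := rfl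
  rw [this]
  convert h using 1
  simp only [Hf, hermite_succ, map_sub, map_mul, aeval_X]
  ring

/-- `∫_{(0,∞)} x^r He_n(x) e^{-x²/2}`. -/
def Jp (r n : ℕ) : ℝ := ∫ x in Ioi (0:ℝ), x ^ r * Hf n x

/-- `∫_{(-∞,0]} x^r He_n(x) e^{-x²/2}`. -/
def Jm (r n : ℕ) : ℝ := ∫ x in Iic (0:ℝ), x ^ r * Hf n x

lemma Jp_zero_succ (n : ℕ) : Jp 0 (n + 1) = aeval 0 (hermite n) := by
  have h := integral_Ioi_of_hasDerivAt_of_tendsto' (a := 0) (m := 0)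
      (f := fun x => -(Hf n x)) (f' := fun x => Hf (n+1) x)
      (fun x _ => (hasDerivAt_Hf n x).neg.congr_deriv (by ring))
      (by simpa using (integrable_pow_mul_Hf 0 (n+1)).integrableOn)
      (by simpa using (tendsto_pow_mul_Hf_atTop 0 n).neg)
  simp only [Hf, zero_sub, neg_neg] at h
  simp only [Jp, pow_zero, one_mul, Hf]
  rw [h]
  simp [G]

lemma Jm_zero_succ (n : ℕ) : Jm 0 (n + 1) = -aeval 0 (hermite n) := by
  have h := integral_Iic_of_hasDerivAt_of_tendsto' (a := 0) (m := 0)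
      (f := fun x => -(Hf n x)) (f' := fun x => Hf (n+1) x)
      (fun x _ => (hasDerivAt_Hf n x).neg.congr_deriv (by ring))
      (by simpa using (integrable_pow_mul_Hf 0 (n+1)).integrableOn)
      (by simpa using (tendsto_pow_mul_Hf_atBot 0 n).neg)
  simp only [sub_zero] at h
  simp only [Jm, pow_zero, one_mul]
  simp only [Hf] at h ⊢
  rw [h]
  simp [G]

lemma Jp_succ_succ (r n : ℕ) : Jp (r + 1) (n + 1) = (r + 1 : ℝ) * Jp r n := by
  have hderiv : ∀ x ∈ Ici (0:ℝ), HasDerivAt (fun x : ℝ => x ^ (r+1) * Hf n x)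
      ((r+1 : ℝ) * (x ^ r * Hf n x) - x ^ (r+1) * Hf (n+1) x) x := by
    intro x _
    have := (hasDerivAt_pow (r+1) x).mul (hasDerivAt_Hf n x)
    refine this.congr_deriv ?_
    push_cast
    ring
  have hint : IntegrableOn (fun x : ℝ =>
      (r+1 : ℝ) * (x ^ r * Hf n x) - x ^ (r+1) * Hf (n+1) x) (Ioi (0:ℝ)) := by
    exact (((integrable_pow_mul_Hf r n).const_mul _).sub
      (integrable_pow_mul_Hf (r+1) (n+1))).integrableOn
  have htend : Tendsto (fun x : ℝ => x ^ (r+1) * Hf n x) atTop (𝓝 0) :=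
    tendsto_pow_mul_Hf_atTop (r+1) n
  have h := integral_Ioi_of_hasDerivAt_of_tendsto' (a := 0) (m := 0) hderiv hint htend
  simp only [zero_pow (Nat.succ_ne_zero r), zero_mul, sub_zero] at h
  rw [integral_sub (((integrable_pow_mul_Hf r n).const_mul _).integrableOn)
      ((integrable_pow_mul_Hf (r+1) (n+1)).integrableOn),
    integral_const_mul] at h
  have : Jp (r+1) (n+1) = (r+1 : ℝ) * Jp r n - 0 := by
    rw [← h]; simp [Jp]
  simpa using this

lemma Jm_succ_succ (r n : ℕ) : Jm (r + 1) (n + 1) = (r + 1 : ℝ) * Jm r n := by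
  have hderiv : ∀ x ∈ Iic (0:ℝ), HasDerivAt (fun x : ℝ => x ^ (r+1) * Hf n x)
      ((r+1 : ℝ) * (x ^ r * Hf n x) - x ^ (r+1) * Hf (n+1) x) x := by
    intro x _
    have := (hasDerivAt_pow (r+1) x).mul (hasDerivAt_Hf n x)
    refine this.congr_deriv ?_
    push_cast
    ring
  have hint : IntegrableOn (fun x : ℝ =>
      (r+1 : ℝ) * (x ^ r * Hf n x) - x ^ (r+1) * Hf (n+1) x) (Iic (0:ℝ)) := by
    exact (((integrable_pow_mul_Hf r n).const_mul _).sub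
      (integrable_pow_mul_Hf (r+1) (n+1))).integrableOn
  have htend : Tendsto (fun x : ℝ => x ^ (r+1) * Hf n x) atBot (𝓝 0) :=
    tendsto_pow_mul_Hf_atBot (r+1) n
  have h := integral_Iic_of_hasDerivAt_of_tendsto' (a := 0) (m := 0) hderiv hint htend
  simp only [zero_pow (Nat.succ_ne_zero r), zero_mul, zero_sub, sub_zero] at h
  rw [integral_sub (((integrable_pow_mul_Hf r n).const_mul _).integrableOn)
      ((integrable_pow_mul_Hf (r+1) (n+1)).integrableOn),
    integral_const_mul] at h
  have : Jm (r+1) (n+1) = (r+1 : ℝ) * Jm r n - 0 := by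
    rw [← h]; simp [Jm]
  simpa using this


lemma Jp_base_pos (r : ℕ) : 0 < Jp r 0 := by
  have hint : IntegrableOn (fun x : ℝ => x ^ r * Hf 0 x) (Ioi 0) :=
    (integrable_pow_mul_Hf r 0).integrableOn
  have hnn : 0 ≤ᵐ[volume.restrict (Ioi (0:ℝ))] fun x => x ^ r * Hf 0 x := by
    filter_upwards [ae_restrict_mem measurableSet_Ioi] with x hx
    have : (0:ℝ) < x := hx
    simp only [Hf, hermite_zero, map_one, one_mul]
    exact le_of_lt (mul_pos (pow_pos this r) (G_pos x))
  rw [Jp, setIntegral_pos_iff_support_of_nonneg_ae hnn hint]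
  have hsub : Ioi (0:ℝ) ⊆ (Function.support fun x => x ^ r * Hf 0 x) ∩ Ioi 0 := by
    intro x hx
    have hx' : (0:ℝ) < x := hx
    refine ⟨?_, hx⟩
    simp only [Function.mem_support, Hf, hermite_zero, map_one, one_mul]
    have := G_pos x
    positivity
  calc (0 : ℝ≥0∞) < volume (Ioi (0:ℝ)) := by simp [Real.volume_Ioi]
    _ ≤ _ := measure_mono hsub

lemma Jm_base (r : ℕ) : Jm r 0 = (-1 : ℝ) ^ r * Jp r 0 := by
  have h := integral_comp_neg_Iic (0:ℝ) (fun y => (-y) ^ r * Hf 0 (-y))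
  simp only [neg_neg, neg_zero] at h
  rw [Jm, h, Jp]
  have : ∀ y : ℝ, (-y) ^ r * Hf 0 (-y) = (-1:ℝ)^r * (y ^ r * Hf 0 y) := by
    intro y
    have hy : Hf 0 (-y) = Hf 0 y := by simp only [Hf, hermite_zero, map_one, one_mul, G_neg]
    rw [hy, neg_pow]
    ring
  simp only [this]
  rw [MeasureTheory.integral_const_mul]

lemma Jp_high (r : ℕ) : ∀ j : ℕ, Jp r (r + 1 + j) = (r.factorial : ℝ) * aeval 0 (hermite j) := by
  induction r with
  | zero => intro j; simpa [Nat.add_comm 1 j] using Jp_zero_succ j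
  | succ r ih =>
      intro j
      have e : r + 1 + 1 + j = (r + 1 + j) + 1 := by omega
      rw [e, Jp_succ_succ r (r + 1 + j), ih j, Nat.factorial_succ]
      push_cast
      ring

lemma Jm_high (r : ℕ) : ∀ j : ℕ, Jm r (r + 1 + j) = -((r.factorial : ℝ) * aeval 0 (hermite j)) := by
  induction r with
  | zero => intro j; simpa [Nat.add_comm 1 j] using Jm_zero_succ j
  | succ r ih =>
      intro j
      have e : r + 1 + 1 + j = (r + 1 + j) + 1 := by omega
      rw [e, Jm_succ_succ r (r + 1 + j), ih j, Nat.factorial_succ]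
      push_cast
      ring

lemma Jp_low (n : ℕ) : ∀ r : ℕ, Jp (n + r) n = ((n + r).factorial / r.factorial : ℝ) * Jp r 0 := by
  induction n with
  | zero =>
      intro r
      have : (r.factorial : ℝ) ≠ 0 := by exact_mod_cast r.factorial_ne_zero
      simp [div_self this]
  | succ n ih =>
      intro r
      have e : n + 1 + r = (n + r) + 1 := by omega
      rw [e, Jp_succ_succ (n + r) n, ih r]
      rw [show (n+r) + 1 = (n + r).succ from rfl, Nat.factorial_succ]
      push_cast
      ring

lemma Jm_low (n : ℕ) : ∀ r : ℕ, Jm (n + r) n = ((n + r).factorial / r.factorial : ℝ) * Jm r 0 := by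
  induction n with
  | zero =>
      intro r
      have : (r.factorial : ℝ) ≠ 0 := by exact_mod_cast r.factorial_ne_zero
      simp [div_self this]
  | succ n ih =>
      intro r
      have e : n + 1 + r = (n + r) + 1 := by omega
      rw [e, Jm_succ_succ (n + r) n, ih r]
      rw [show (n+r) + 1 = (n + r).succ from rfl, Nat.factorial_succ]
      push_cast
      ring


lemma continuous_Hf (n : ℕ) : Continuous (Hf n) :=
  (Polynomial.continuous_aeval _).mul continuous_G

lemma abs_sign_le_one (x : ℝ) : |Real.sign x| ≤ 1 := by
  rcases Real.sign_apply_eq x with h | h | h <;> rw [h] <;> norm_num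

lemma measurable_sign : Measurable Real.sign := by
  have h : Real.sign = fun x : ℝ => if x < 0 then (-1:ℝ) else if 0 < x then 1 else 0 := by
    funext x
    rcases lt_trichotomy x 0 with h | h | h
    · rw [Real.sign_of_neg h, if_pos h]
    · subst h; rw [Real.sign_zero, if_neg (lt_irrefl _), if_neg (lt_irrefl _)]
    · rw [Real.sign_of_pos h, if_neg (asymm h), if_pos h]
  rw [h]
  exact Measurable.ite (measurableSet_lt measurable_id measurable_const) measurable_const
    (Measurable.ite (measurableSet_lt measurable_const measurable_id)
      measurable_const measurable_const)

lemma pdf_eq (x : ℝ) : gaussianPDFReal 0 1 x = (Real.sqrt (2 * π))⁻¹ * G x := by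
  rw [gaussianPDFReal, G]
  norm_num
  exact Or.inl (by ring)

lemma stdGaussian_integral (f : ℝ → ℝ) :
    ∫ x, f x ∂stdGaussian = ∫ x, gaussianPDFReal 0 1 x * f x := by
  rw [_root_.stdGaussian, gaussianReal_of_var_ne_zero _ one_ne_zero]
  have hd : gaussianPDF 0 1 = fun x => (((gaussianPDFReal 0 1 x).toNNReal : ℝ≥0) : ℝ≥0∞) :=
    rfl
  rw [hd, integral_withDensity_eq_integral_smul ((measurable_gaussianPDFReal 0 1).real_toNNReal) f]
  congr 1
  funext x
  rw [NNReal.smul_def, smul_eq_mul, Real.coe_toNNReal _ (gaussianPDFReal_nonneg 0 1 x)]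

lemma integrable_sign_mul (k n : ℕ) :
    Integrable (fun x : ℝ => Real.sign x * (x ^ k * Hf n x)) := by
  refine Integrable.mono' (integrable_pow_mul_Hf k n).abs ?_ ?_
  · exact (measurable_sign.mul
      ((measurable_id.pow_const k).mul (continuous_Hf n).measurable)).aestronglyMeasurable
  · filter_upwards with x
    rw [Real.norm_eq_abs, abs_mul]
    calc |Real.sign x| * |x ^ k * Hf n x| ≤ 1 * |x ^ k * Hf n x| :=
          mul_le_mul_of_nonneg_right (abs_sign_le_one x) (abs_nonneg _)
      _ = |x ^ k * Hf n x| := one_mul _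

lemma integral_sign_mul (k n : ℕ) :
    (∫ x : ℝ, Real.sign x * (x ^ k * Hf n x)) = Jp k n - Jm k n := by
  have hsgn := integrable_sign_mul k n
  rw [← intervalIntegral.integral_Iic_add_Ioi (b := 0) hsgn.integrableOn hsgn.integrableOn]
  have hpos : (∫ x in Ioi (0:ℝ), Real.sign x * (x ^ k * Hf n x)) = Jp k n := by
    rw [Jp]
    refine setIntegral_congr_fun measurableSet_Ioi fun x hx => ?_
    rw [Real.sign_of_pos hx, one_mul]
  have hIio : (∫ x in Iic (0:ℝ), Real.sign x * (x ^ k * Hf n x)) = -(Jm k n) := by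
    rw [Jm, ← setIntegral_congr_set (Iio_ae_eq_Iic (a := (0:ℝ))),
      ← setIntegral_congr_set (Iio_ae_eq_Iic (a := (0:ℝ))), ← integral_neg]
    refine setIntegral_congr_fun measurableSet_Iio fun x hx => ?_
    rw [Real.sign_of_neg hx]
    ring
  rw [hpos, hIio]
  ring

lemma hc_eq (k n : ℕ) :
    hermiteCoeff (refAct k) n =
      ((2 * (k.factorial : ℝ)) * Real.sqrt (n.factorial) * Real.sqrt (2 * π))⁻¹
        * (Jp k n - Jm k n) := by
  rw [hermiteCoeff, stdGaussian_integral]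
  have hpt : ∀ x : ℝ, gaussianPDFReal 0 1 x * (refAct k x * hermiteFun n x)
      = ((2 * (k.factorial : ℝ)) * Real.sqrt (n.factorial) * Real.sqrt (2 * π))⁻¹
        * (Real.sign x * (x ^ k * Hf n x)) := by
    intro x
    rw [pdf_eq, refAct, hermiteFun, Hf]
    have h1 : Real.sqrt (2 * π) ≠ 0 := by
      refine ne_of_gt (Real.sqrt_pos.mpr (by positivity))
    have h2 : Real.sqrt (n.factorial) ≠ 0 := by
      refine ne_of_gt (Real.sqrt_pos.mpr (by exact_mod_cast n.factorial_pos))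
    have h3 : (k.factorial : ℝ) ≠ 0 := by exact_mod_cast k.factorial_ne_zero
    field_simp
  simp_rw [hpt]
  rw [MeasureTheory.integral_const_mul, integral_sign_mul]


lemma sqrt_fact_pos (n : ℕ) : 0 < Real.sqrt (n.factorial) :=
  Real.sqrt_pos.mpr (by exact_mod_cast n.factorial_pos)

lemma sqrt_two_pi_pos : 0 < Real.sqrt (2 * π) :=
  Real.sqrt_pos.mpr (by positivity)

lemma aeval_hermite_at_zero (p : ℕ) : aeval (0:ℝ) (hermite p) = ((hermite p).coeff 0 : ℝ) := by
  rw [aeval_def, Polynomial.eval₂_at_zero]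
  rfl

lemma aeval_hermite_zero_odd {j : ℕ} (hj : Odd j) : aeval (0:ℝ) (hermite j) = 0 := by
  rw [aeval_hermite_at_zero, Polynomial.coeff_hermite_of_odd_add (by simpa using hj)]
  simp

lemma aeval_hermite_zero_even (i : ℕ) :
    aeval (0:ℝ) (hermite (2 * i)) = (-1:ℝ) ^ i * ((2 * i - 1).doubleFactorial : ℝ) := by
  have h := Polynomial.coeff_hermite_explicit i 0
  rw [Nat.add_zero] at h
  rw [aeval_hermite_at_zero, h]
  push_cast
  simp

lemma hc_high (k j : ℕ) : hermiteCoeff (refAct k) (k + 1 + j) =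
    aeval 0 (hermite j) / (Real.sqrt ((k + 1 + j).factorial) * Real.sqrt (2 * π)) := by
  rw [hc_eq, Jp_high, Jm_high]
  have h1 : (k.factorial : ℝ) ≠ 0 := by exact_mod_cast k.factorial_ne_zero
  have h2 := (sqrt_fact_pos (k+1+j)).ne'
  have h3 := sqrt_two_pi_pos.ne'
  field_simp
  ring

lemma hc_high_odd (k i : ℕ) :
    |hermiteCoeff (refAct k) (k + 1 + 2 * i)| =
      ((2 * i - 1).doubleFactorial : ℝ)
        / (Real.sqrt ((k + 1 + 2 * i).factorial) * Real.sqrt (2 * π)) := by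
  rw [hc_high, aeval_hermite_zero_even, abs_div, abs_mul, abs_mul]
  rw [abs_of_nonneg (Real.sqrt_nonneg _), abs_of_nonneg (Real.sqrt_nonneg _),
    abs_of_nonneg (by positivity : (0:ℝ) ≤ ((2 * i - 1).doubleFactorial : ℝ))]
  rw [abs_pow, abs_neg, abs_one, one_pow, one_mul]

lemma hc_even_zero (k n : ℕ) (h : Even ((n:ℤ) - k)) : hermiteCoeff (refAct k) n = 0 := by
  rcases le_or_gt n k with hnk | hnk
  · obtain ⟨r, rfl⟩ : ∃ r, k = n + r := ⟨k - n, by omega⟩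
    have hre : Even r := by
      rcases h with ⟨t, ht⟩
      rw [Nat.even_iff]
      push_cast at ht
      omega
    rw [hc_eq, Jp_low, Jm_low, Jm_base, hre.neg_one_pow]
    ring
  · obtain ⟨j, rfl⟩ : ∃ j, n = k + 1 + j := ⟨n - k - 1, by omega⟩
    have hj : Odd j := by
      rcases h with ⟨t, ht⟩
      rw [Nat.odd_iff]
      push_cast at ht
      omega
    rw [hc_high, aeval_hermite_zero_odd hj, zero_div]

lemma hc_low_pos (n r : ℕ) (hr : Odd r) : 0 < hermiteCoeff (refAct (n + r)) n := by
  rw [hc_eq, Jp_low, Jm_low, Jm_base, hr.neg_one_pow]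
  have e : ((n + r).factorial / r.factorial : ℝ) * Jp r 0 -
      ((n + r).factorial / r.factorial : ℝ) * (-1 * Jp r 0)
      = 2 * (((n + r).factorial : ℝ) / r.factorial) * Jp r 0 := by ring
  rw [e]
  have hA : (0:ℝ) < ((n + r).factorial : ℝ) / r.factorial := by
    apply div_pos <;> exact_mod_cast Nat.factorial_pos _
  have hJ := Jp_base_pos r
  have hfk : (0:ℝ) < (( (n+r).factorial : ℝ)) := by exact_mod_cast Nat.factorial_pos _
  have hinv : (0:ℝ) < ((2 * ((n+r).factorial : ℝ)) * Real.sqrt (n.factorial) * Real.sqrt (2 * π))⁻¹ := by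
    apply inv_pos.mpr
    have := sqrt_fact_pos n
    have := sqrt_two_pi_pos
    positivity
  positivity


def w : ℕ → ℝ
  | 0 => 1
  | (i+1) => w i * ((2*i+1)/(2*i+2))

lemma w_pos : ∀ i, 0 < w i := by
  intro i
  induction i with
  | zero => norm_num [w]
  | succ i ih =>
      have : (0:ℝ) < (2*(i:ℝ)+1)/(2*(i:ℝ)+2) := by positivity
      rw [w]
      push_cast
      positivity

lemma w_sq_upper : ∀ i : ℕ, (2*(i:ℝ)+1) * w i ^ 2 ≤ 1 := by
  intro i
  induction i with
  | zero => norm_num [w]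
  | succ i ih =>
      have hw := w_pos i
      have hd : (0:ℝ) < (2*(i:ℝ)+2)^2 := by positivity
      rw [w]
      push_cast
      rw [mul_pow, div_pow,
        show (2*((i:ℝ)+1)+1) * (w i ^2 * ((2*(i:ℝ)+1)^2/(2*(i:ℝ)+2)^2))
          = ((2*((i:ℝ)+1)+1) * (w i^2 * (2*(i:ℝ)+1)^2))/(2*(i:ℝ)+2)^2 from by ring,
        div_le_one hd]
      nlinarith [ih, sq_nonneg (w i), hw.le]

lemma w_sq_lower_aux : ∀ i : ℕ, 1 ≤ i → 1 ≤ 4*(i:ℝ) * w i ^ 2 := by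
  intro i
  induction i with
  | zero => omega
  | succ i ih =>
      intro _
      rcases Nat.eq_or_lt_of_le (Nat.zero_le i) with h0 | h1
      · rw [← h0]
        norm_num [w]
      · have hi1 : 1 ≤ i := h1
        have ih' := ih hi1
        have hw := w_pos i
        have hd : (0:ℝ) < (2*(i:ℝ)+2)^2 := by positivity
        have hi1' : (1:ℝ) ≤ (i:ℝ) := by exact_mod_cast hi1
        rw [w]
        push_cast
        rw [mul_pow, div_pow,
          show 4*((i:ℝ)+1) * (w i ^2 * ((2*(i:ℝ)+1)^2/(2*(i:ℝ)+2)^2))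
            = (4*((i:ℝ)+1) * (w i^2 * (2*(i:ℝ)+1)^2))/(2*(i:ℝ)+2)^2 from by ring,
          le_div_iff₀ hd, one_mul]
        nlinarith [mul_le_mul_of_nonneg_right ih' (sq_nonneg (2*(i:ℝ)+1)), hw.le, hi1',
          sq_nonneg (w i)]

lemma w_sq_lower (i : ℕ) : 1 ≤ 4*((i:ℝ)+1) * w i ^ 2 := by
  rcases Nat.eq_zero_or_pos i with h0 | h1
  · subst h0; norm_num [w]
  · have h := w_sq_lower_aux i h1
    nlinarith [sq_nonneg (w i)]

lemma dfs (i : ℕ) : (2*(i+1)-1).doubleFactorial = (2*i+1) * (2*i-1).doubleFactorial := by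
  rcases i with _ | j
  · norm_num [Nat.doubleFactorial]
  · have e1 : 2*(j+1+1)-1 = (2*j+1)+2 := by omega
    have e2 : 2*(j+1)-1 = 2*j+1 := by omega
    rw [e1, e2, Nat.doubleFactorial_add_two]
    ring_nf

lemma df_sq : ∀ i : ℕ, (((2*i-1).doubleFactorial : ℝ))^2 = w i * ((2*i).factorial : ℝ) := by
  intro i
  induction i with
  | zero => norm_num [w, Nat.doubleFactorial]
  | succ i ih =>
      rw [dfs i]
      have e1 : 2*(i+1) = (2*i+1)+1 := by omega
      rw [e1, Nat.factorial_succ, show (2*i+1) = (2*i)+1 from rfl, Nat.factorial_succ, w]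
      push_cast
      push_cast at ih
      have hd : (2*(i:ℝ)+2) ≠ 0 := by positivity
      field_simp
      linear_combination (2*(i:ℝ)+2) * ih

lemma fact_lower (m : ℕ) : ∀ t : ℕ, m.factorial * (m+1)^t ≤ (m+t).factorial := by
  intro t
  induction t with
  | zero => simp
  | succ t ih =>
      have e : m + (t+1) = (m+t)+1 := by omega
      rw [e, Nat.factorial_succ, pow_succ]
      calc m.factorial * ((m+1)^t * (m+1)) = (m+1) * (m.factorial * (m+1)^t) := by ring
        _ ≤ (m+t+1) * (m+t).factorial := by
            exact Nat.mul_le_mul (by omega) ih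

lemma fact_upper (m : ℕ) : ∀ t : ℕ, (m+t).factorial ≤ m.factorial * (m+t+1)^t := by
  intro t
  induction t with
  | zero => simp
  | succ t ih =>
      have e : m + (t+1) = (m+t)+1 := by omega
      rw [e, Nat.factorial_succ, pow_succ]
      calc (m+t+1) * (m+t).factorial ≤ (m+t+1) * (m.factorial * (m+t+1)^t) :=
            Nat.mul_le_mul_left _ ih
        _ = m.factorial * ((m+t+1)^t * (m+t+1)) := by ring
        _ ≤ m.factorial * ((m+(t+1)+1)^t * (m+(t+1)+1)) := by
            apply Nat.mul_le_mul_left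
            exact Nat.mul_le_mul (Nat.pow_le_pow_left (by omega) t) (by omega)


lemma inv_le_mul_inv' {a b c : ℝ} (ha : 0 < a) (hb : 0 < b) (h : a ≤ c * b) :
    b⁻¹ ≤ c * a⁻¹ := by
  rw [← one_div, ← div_eq_mul_inv, div_le_div_iff₀ hb ha, one_mul]
  linarith

lemma S_bounds (k i : ℕ) :
    (1/2 : ℝ) * ((((k+1+2*i:ℕ):ℝ)+1)^(k+1) * Real.sqrt (((k+1+2*i:ℕ):ℝ)+1))⁻¹
        ≤ (((2*i-1).doubleFactorial : ℝ))^2 / (((k+1+2*i).factorial : ℝ)) ∧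
    (((2*i-1).doubleFactorial : ℝ))^2 / (((k+1+2*i).factorial : ℝ))
        ≤ (Real.sqrt ((k:ℝ)+2) * ((k:ℝ)+2)^(k+1))
            * ((((k+1+2*i:ℕ):ℝ)+1)^(k+1) * Real.sqrt (((k+1+2*i:ℕ):ℝ)+1))⁻¹ := by
  have hk0 : (0:ℝ) ≤ (k:ℝ) := Nat.cast_nonneg k
  have hi0 : (0:ℝ) ≤ (i:ℝ) := Nat.cast_nonneg i
  set n : ℕ := k+1+2*i with hn
  set N : ℝ := ((n:ℕ):ℝ)+1 with hNdef
  have hNpos : 0 < N := by positivity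
  have hNval : N = (k:ℝ)+1+2*(i:ℝ)+1 := by rw [hNdef, hn]; push_cast; ring
  have hfactpos : (0:ℝ) < (n.factorial : ℝ) := by exact_mod_cast n.factorial_pos
  have hf2pos : (0:ℝ) < ((2*i).factorial : ℝ) := by exact_mod_cast (2*i).factorial_pos
  have hwpos := w_pos i
  have hsqrtNpos : 0 < Real.sqrt N := Real.sqrt_pos.mpr hNpos
  have h2i1pos : (0:ℝ) < 2*(i:ℝ)+1 := by positivity
  have hS : (((2*i-1).doubleFactorial : ℝ))^2 / ((n.factorial : ℝ))
      = w i * (((2*i).factorial : ℝ) / (n.factorial : ℝ)) := by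
    rw [df_sq]; ring
  have hNle : N ≤ ((k:ℝ)+2) * (2*(i:ℝ)+1) := by
    rw [hNval]; nlinarith [mul_nonneg hk0 hi0]
  -- factorial comparisons, cast to ℝ
  have hcast_up : (n.factorial : ℝ) ≤ ((2*i).factorial : ℝ) * N^(k+1) := by
    have h := fact_upper (2*i) (k+1)
    have e : 2*i + (k+1) = n := by omega
    rw [e] at h
    calc (n.factorial : ℝ) ≤ (((2*i).factorial * (n+1)^(k+1) : ℕ) : ℝ) := by
          exact_mod_cast h
      _ = ((2*i).factorial : ℝ) * N^(k+1) := by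
          push_cast
          rw [← hNdef]
  have hcast_low : ((2*i).factorial : ℝ) * (2*(i:ℝ)+1)^(k+1) ≤ (n.factorial : ℝ) := by
    have h := fact_lower (2*i) (k+1)
    have e : 2*i + (k+1) = n := by omega
    rw [e] at h
    calc ((2*i).factorial : ℝ) * (2*(i:ℝ)+1)^(k+1)
        = (((2*i).factorial * (2*i+1)^(k+1) : ℕ) : ℝ) := by push_cast; ring_nf
      _ ≤ (n.factorial : ℝ) := by exact_mod_cast h
  -- lower bound on w
  have hw1 : (2:ℝ)⁻¹ * (Real.sqrt N)⁻¹ ≤ w i := by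
    have h1 : ((4*((i:ℝ)+1)))⁻¹ ≤ w i ^ 2 := by
      rw [inv_eq_one_div, div_le_iff₀ (by positivity)]
      linarith [w_sq_lower i]
    have h2 : Real.sqrt ((4*((i:ℝ)+1))⁻¹) ≤ w i := by
      have := Real.sqrt_le_sqrt h1
      rwa [Real.sqrt_sq hwpos.le] at this
    have h3 : Real.sqrt ((4*((i:ℝ)+1))⁻¹) = (2:ℝ)⁻¹ * (Real.sqrt ((i:ℝ)+1))⁻¹ := by
      rw [Real.sqrt_inv, show (4:ℝ)*((i:ℝ)+1) = (2:ℝ)^2 * ((i:ℝ)+1) by ring,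
        Real.sqrt_mul (by positivity), Real.sqrt_sq (by norm_num), mul_inv]
    have h4 : (Real.sqrt N)⁻¹ ≤ (Real.sqrt ((i:ℝ)+1))⁻¹ := by
      have hp : 0 < Real.sqrt ((i:ℝ)+1) := Real.sqrt_pos.mpr (by positivity)
      have hle : Real.sqrt ((i:ℝ)+1) ≤ Real.sqrt N := by
        apply Real.sqrt_le_sqrt
        rw [hNval]; linarith
      exact inv_anti₀ hp hle
    calc (2:ℝ)⁻¹ * (Real.sqrt N)⁻¹ ≤ (2:ℝ)⁻¹ * (Real.sqrt ((i:ℝ)+1))⁻¹ :=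
          mul_le_mul_of_nonneg_left h4 (by norm_num)
      _ = Real.sqrt ((4*((i:ℝ)+1))⁻¹) := h3.symm
      _ ≤ w i := h2
  -- upper bound on w
  have hw2 : w i ≤ Real.sqrt ((k:ℝ)+2) * (Real.sqrt N)⁻¹ := by
    have h1 : w i ^ 2 ≤ ((2*(i:ℝ)+1))⁻¹ := by
      rw [inv_eq_one_div, le_div_iff₀ h2i1pos]
      linarith [w_sq_upper i]
    have h2 : w i ≤ (Real.sqrt (2*(i:ℝ)+1))⁻¹ := by
      have := Real.sqrt_le_sqrt h1
      rwa [Real.sqrt_sq hwpos.le, Real.sqrt_inv] at this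
    refine h2.trans (inv_le_mul_inv' hsqrtNpos (Real.sqrt_pos.mpr h2i1pos) ?_)
    rw [← Real.sqrt_mul (by positivity)]
    exact Real.sqrt_le_sqrt hNle
  -- ratio bounds
  have hq_low : (N^(k+1))⁻¹ ≤ ((2*i).factorial : ℝ) / (n.factorial : ℝ) := by
    rw [le_div_iff₀ hfactpos]
    calc (N^(k+1))⁻¹ * (n.factorial : ℝ)
        ≤ (N^(k+1))⁻¹ * (((2*i).factorial : ℝ) * N^(k+1)) :=
          mul_le_mul_of_nonneg_left hcast_up (by positivity)
      _ = ((2*i).factorial : ℝ) := by field_simp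
  have hq_up : ((2*i).factorial : ℝ) / (n.factorial : ℝ)
      ≤ ((k:ℝ)+2)^(k+1) * (N^(k+1))⁻¹ := by
    rw [div_le_iff₀ hfactpos]
    have key : ((2*(i:ℝ)+1)^(k+1))⁻¹ ≤ ((k:ℝ)+2)^(k+1) * (N^(k+1))⁻¹ := by
      apply inv_le_mul_inv' (by positivity) (by positivity)
      rw [← mul_pow]
      exact pow_le_pow_left₀ hNpos.le hNle (k+1)
    calc ((2*i).factorial : ℝ)
        = (((2*i).factorial : ℝ) * (2*(i:ℝ)+1)^(k+1)) * ((2*(i:ℝ)+1)^(k+1))⁻¹ := by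
          field_simp
      _ ≤ (n.factorial : ℝ) * ((2*(i:ℝ)+1)^(k+1))⁻¹ :=
          mul_le_mul_of_nonneg_right hcast_low (by positivity)
      _ ≤ (n.factorial : ℝ) * (((k:ℝ)+2)^(k+1) * (N^(k+1))⁻¹) :=
          mul_le_mul_of_nonneg_left key hfactpos.le
      _ = ((k:ℝ)+2)^(k+1) * (N^(k+1))⁻¹ * (n.factorial : ℝ) := by ring
  constructor
  · rw [hS]
    calc (1/2 : ℝ) * (N^(k+1) * Real.sqrt N)⁻¹
        = ((2:ℝ)⁻¹ * (Real.sqrt N)⁻¹) * (N^(k+1))⁻¹ := by rw [mul_inv]; ring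
      _ ≤ w i * (((2*i).factorial : ℝ) / (n.factorial : ℝ)) :=
          mul_le_mul hw1 hq_low (by positivity) hwpos.le
  · rw [hS]
    calc w i * (((2*i).factorial : ℝ) / (n.factorial : ℝ))
        ≤ (Real.sqrt ((k:ℝ)+2) * (Real.sqrt N)⁻¹) * (((k:ℝ)+2)^(k+1) * (N^(k+1))⁻¹) :=
          mul_le_mul hw2 hq_up (by positivity) (by positivity)
      _ = (Real.sqrt ((k:ℝ)+2) * ((k:ℝ)+2)^(k+1)) * (N^(k+1) * Real.sqrt N)⁻¹ := by
          rw [mul_inv]; ring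


lemma rpow_helper (k : ℕ) {N : ℝ} (hN : 0 < N) :
    Real.sqrt ((N^(k+1) * Real.sqrt N)⁻¹) = N ^ (-(3:ℝ)/4 - (k:ℝ)/2) := by
  have h1 : (N^(k+1) * Real.sqrt N)⁻¹ = N ^ (-((((k+1:ℕ)):ℝ) + 1/2)) := by
    rw [← Real.rpow_natCast N (k+1), Real.sqrt_eq_rpow, ← Real.rpow_add hN,
      ← Real.rpow_neg hN.le]
  rw [h1, Real.sqrt_eq_rpow, ← Real.rpow_mul hN.le]
  congr 1
  push_cast
  ring

lemma hc_asymp (k : ℕ) : ∃ c C : ℝ, 0 < c ∧ 0 < C ∧ ∀ i : ℕ,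
    c * ((((k+1+2*i : ℕ)):ℝ) + 1) ^ (-(3:ℝ)/4 - (k:ℝ)/2)
        ≤ |hermiteCoeff (refAct k) (k+1+2*i)| ∧
    |hermiteCoeff (refAct k) (k+1+2*i)|
        ≤ C * ((((k+1+2*i : ℕ)):ℝ) + 1) ^ (-(3:ℝ)/4 - (k:ℝ)/2) := by
  have h2pi := sqrt_two_pi_pos
  have hCk : (0:ℝ) < Real.sqrt ((k:ℝ)+2) * ((k:ℝ)+2)^(k+1) := by
    have : (0:ℝ) < Real.sqrt ((k:ℝ)+2) := Real.sqrt_pos.mpr (by positivity)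
    positivity
  refine ⟨Real.sqrt (1/2) / Real.sqrt (2*π),
    Real.sqrt (Real.sqrt ((k:ℝ)+2) * ((k:ℝ)+2)^(k+1)) / Real.sqrt (2*π),
    by positivity, by positivity, fun i => ?_⟩
  have hval := hc_high_odd k i
  obtain ⟨hlow, hup⟩ := S_bounds k i
  set n : ℕ := k+1+2*i with hn
  set N : ℝ := ((n:ℕ):ℝ)+1 with hNdef
  set D : ℝ := ((2*i-1).doubleFactorial : ℝ) with hDdef
  have hNpos : 0 < N := by positivity
  have hfpos : (0:ℝ) < Real.sqrt (n.factorial) := sqrt_fact_pos n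
  have hDnn : (0:ℝ) ≤ D := by rw [hDdef]; positivity
  have hsq : D / Real.sqrt (n.factorial) = Real.sqrt (D^2 / (n.factorial : ℝ)) := by
    rw [Real.sqrt_div (sq_nonneg D), Real.sqrt_sq hDnn]
  have hhc : |hermiteCoeff (refAct k) n| = Real.sqrt (D^2 / (n.factorial:ℝ)) / Real.sqrt (2*π) := by
    rw [hval, ← div_div, hsq]
  constructor
  · rw [hhc]
    have hkey : Real.sqrt (1/2) * (N ^ (-(3:ℝ)/4 - (k:ℝ)/2))
        ≤ Real.sqrt (D^2/(n.factorial:ℝ)) := by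
      rw [← rpow_helper k hNpos, ← Real.sqrt_mul (by norm_num)]
      exact Real.sqrt_le_sqrt (by exact_mod_cast hlow)
    rw [div_mul_eq_mul_div]
    gcongr
  · rw [hhc]
    have hkey : Real.sqrt (D^2/(n.factorial:ℝ))
        ≤ Real.sqrt (Real.sqrt ((k:ℝ)+2) * ((k:ℝ)+2)^(k+1)) * (N ^ (-(3:ℝ)/4 - (k:ℝ)/2)) := by
      rw [← rpow_helper k hNpos, ← Real.sqrt_mul hCk.le]
      exact Real.sqrt_le_sqrt (by exact_mod_cast hup)
    rw [div_mul_eq_mul_div]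
    gcongr


end RefActAux

/-- for fixed `k`, `a_n(s_k) = 0` for `n−k` even, and
`|a_n(s_k)| = Θ((n+1)^{−3/4−k/2})` over `n` with `n−k` odd. -/
theorem refAct_hermiteCoeff_decay (k : ℕ) :
    ∃ c C : ℝ, 0 < c ∧ 0 < C ∧ ∀ n : ℕ,
      (Even ((n : ℤ) - k) → hermiteCoeff (refAct k) n = 0) ∧
      (Odd ((n : ℤ) - k) →
        c * ((n : ℝ) + 1) ^ (-(3 : ℝ) / 4 - (k : ℝ) / 2) ≤ |hermiteCoeff (refAct k) n| ∧
        |hermiteCoeff (refAct k) n| ≤ C * ((n : ℝ) + 1) ^ (-(3 : ℝ) / 4 - (k : ℝ) / 2)) := by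
  obtain ⟨c0, C0, hc0, hC0, hbound⟩ := RefActAux.hc_asymp k
  set P : ℕ → ℝ := fun n =>
    |hermiteCoeff (refAct k) n| / ((n:ℝ)+1) ^ (-(3:ℝ)/4 - (k:ℝ)/2) with hP
  set T : Finset ℕ := (Finset.range k).filter (fun n => Odd ((n:ℤ) - (k:ℤ))) with hT
  have hPpos : ∀ n ∈ T, 0 < P n := by
    intro n hn
    rw [hT, Finset.mem_filter, Finset.mem_range] at hn
    obtain ⟨hnk, hodd⟩ := hn
    have hrodd : Odd (k - n) := by
      rcases hodd with ⟨t, ht⟩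
      rw [Nat.odd_iff]
      omega
    have hpos : 0 < hermiteCoeff (refAct k) n := by
      have := RefActAux.hc_low_pos n (k - n) hrodd
      rwa [show n + (k - n) = k by omega] at this
    have : 0 < |hermiteCoeff (refAct k) n| := abs_pos.mpr hpos.ne'
    have hr : (0:ℝ) < ((n:ℝ)+1) ^ (-(3:ℝ)/4 - (k:ℝ)/2) :=
      Real.rpow_pos_of_pos (by positivity) _
    exact div_pos this hr
  obtain ⟨cs, hcs_pos, hcs⟩ : ∃ cs : ℝ, 0 < cs ∧ ∀ n ∈ T, cs ≤ P n := by
    rcases T.eq_empty_or_nonempty with h | h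
    · exact ⟨1, one_pos, by simp [h]⟩
    · exact ⟨T.inf' h P, (Finset.lt_inf'_iff h).mpr (fun n hn => hPpos n hn),
        fun n hn => Finset.inf'_le P hn⟩
  obtain ⟨Cs, hCs_pos, hCs⟩ : ∃ Cs : ℝ, 0 < Cs ∧ ∀ n ∈ T, P n ≤ Cs := by
    rcases T.eq_empty_or_nonempty with h | h
    · exact ⟨1, one_pos, by simp [h]⟩
    · refine ⟨max 1 (T.sup' h P), lt_of_lt_of_le one_pos (le_max_left _ _), fun n hn => ?_⟩
      exact le_max_of_le_right (Finset.le_sup' P hn)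
  refine ⟨min c0 cs, max C0 Cs, lt_min hc0 hcs_pos, lt_of_lt_of_le hC0 (le_max_left _ _),
    fun n => ⟨fun h => RefActAux.hc_even_zero k n h, fun hodd => ?_⟩⟩
  have hrpos : (0:ℝ) < ((n:ℝ)+1) ^ (-(3:ℝ)/4 - (k:ℝ)/2) :=
    Real.rpow_pos_of_pos (by positivity) _
  rcases lt_or_ge n k with hnk | hnk
  · -- small case
    have hnT : n ∈ T := by
      rw [hT, Finset.mem_filter, Finset.mem_range]
      exact ⟨hnk, hodd⟩
    have habs : |hermiteCoeff (refAct k) n| = P n * ((n:ℝ)+1) ^ (-(3:ℝ)/4 - (k:ℝ)/2) := by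
      rw [hP]
      field_simp
    constructor
    · rw [habs]
      exact mul_le_mul_of_nonneg_right ((min_le_right _ _).trans (hcs n hnT)) hrpos.le
    · rw [habs]
      exact mul_le_mul_of_nonneg_right ((hCs n hnT).trans (le_max_right _ _)) hrpos.le
  · -- large case
    have hne : n ≠ k := by
      intro h
      subst h
      rcases hodd with ⟨t, ht⟩
      omega
    have hgt : k + 1 ≤ n := by omega
    obtain ⟨i, rfl⟩ : ∃ i, n = k + 1 + 2*i := by
      rcases hodd with ⟨t, ht⟩
      exact ⟨(n - k - 1)/2, by omega⟩
    obtain ⟨hl, hu⟩ := hbound i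
    constructor
    · exact le_trans (mul_le_mul_of_nonneg_right (min_le_left _ _) hrpos.le) hl
    · exact le_trans hu (mul_le_mul_of_nonneg_right (le_max_left _ _) hrpos.le)

end
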